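/- For any p ≥ 2 and any width h ≥ 8p, there exists a parameter θ = (W, V) with W ∈ ℝ^{h×2p}, V ∈ ℝ^{p×h}, and ||θ||_∞ ≤ ⌊h/(8p)⌋^{−1/3}, such that the two-layer quadratic network f(θ; (e_a, e_b)) = V·(W(e_a,e_b))^{⊙2} exactly computes p times the one-hot encoding of a+b mod p: for all a, b, c ∈ [p], e_c^T f(θ; (e_a, e_b)) = p·1(a + b ≡ c mod p). -/

import Mathlib

open Finset Matrix

/- Auxiliary definitions for the trigonometric construction. -/
noncomputable def tf (t : ℕ) (x : ℝ) : ℝ :=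
  if t = 0 ∨ t = 1 ∨ t = 6 ∨ t = 7 then Real.cos x else Real.sin x

noncomputable def tg (t : ℕ) (x : ℝ) : ℝ :=
  if t = 0 ∨ t = 1 ∨ t = 4 ∨ t = 5 then Real.cos x else Real.sin x

def sg (t : ℕ) : ℝ := if t % 2 = 0 then 1 else -1

def vs (t : ℕ) : ℝ := if t = 0 ∨ t = 3 ∨ t = 4 ∨ t = 6 then 1 else -1

noncomputable def vg (t : ℕ) (x : ℝ) : ℝ := if t < 4 then Real.cos x else Real.sin x

noncomputable def thet (p j x : ℕ) : ℝ := 2 * Real.pi * j * x / p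

noncomputable def Wfun (p m k x : ℕ) : ℝ :=
  if k < 8 * p * m then
    (m : ℝ) ^ (-(1 / 3 : ℝ)) *
      (if x < p then tf (k % (8 * p) / p) (thet p (k % (8 * p) % p) x)
       else sg (k % (8 * p) / p) * tg (k % (8 * p) / p) (thet p (k % (8 * p) % p) (x - p)))
  else 0

noncomputable def Vfun (p m k c : ℕ) : ℝ :=
  if k < 8 * p * m then
    (m : ℝ) ^ (-(1 / 3 : ℝ)) *
      (vs (k % (8 * p) / p) * vg (k % (8 * p) / p) (thet p (k % (8 * p) % p) c) / 4)
  else 0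

lemma tf_abs (t : ℕ) (x : ℝ) : |tf t x| ≤ 1 := by
  unfold tf; split <;> simp [Real.abs_cos_le_one, Real.abs_sin_le_one]

lemma tg_abs (t : ℕ) (x : ℝ) : |tg t x| ≤ 1 := by
  unfold tg; split <;> simp [Real.abs_cos_le_one, Real.abs_sin_le_one]

lemma sg_abs (t : ℕ) : |sg t| = 1 := by
  unfold sg; split <;> simp

lemma vs_abs (t : ℕ) : |vs t| = 1 := by
  unfold vs; split <;> simp

lemma vg_abs (t : ℕ) (x : ℝ) : |vg t x| ≤ 1 := by
  unfold vg; split <;> simp [Real.abs_cos_le_one, Real.abs_sin_le_one]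

lemma sum_mod_lemma (f : ℕ → ℝ) (m n : ℕ) :
    ∑ k ∈ range (m * n), f (k % n) = m * ∑ r ∈ range n, f r := by
  induction m with
  | zero => simp
  | succ m ih =>
    rw [Nat.succ_mul, Finset.sum_range_add, ih]
    have : ∑ x ∈ range n, f ((m * n + x) % n) = ∑ x ∈ range n, f x := by
      refine Finset.sum_congr rfl fun x hx => ?_
      rw [mul_comm m n, Nat.mul_add_mod, Nat.mod_eq_of_lt (mem_range.1 hx)]
    rw [this]; push_cast; ring

lemma sum_divmod_lemma (f : ℕ → ℕ → ℝ) (a b : ℕ) (hb : 0 < b) :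
    ∑ k ∈ range (a * b), f (k / b) (k % b) = ∑ i ∈ range a, ∑ j ∈ range b, f i j := by
  induction a with
  | zero => simp
  | succ a ih =>
    rw [Nat.succ_mul, Finset.sum_range_add, ih, Finset.sum_range_succ]
    congr 1
    refine Finset.sum_congr rfl fun x hx => ?_
    have hx' := mem_range.1 hx
    have h1 : (a * b + x) % b = x := by
      rw [mul_comm a b, Nat.mul_add_mod, Nat.mod_eq_of_lt hx']
    have h2 : (a * b + x) / b = a := by
      rw [mul_comm a b, Nat.mul_add_div hb, Nat.div_eq_of_lt hx', Nat.add_zero]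
    rw [h1, h2]

lemma core_trig (α β γ : ℝ) :
    ∑ t ∈ range 8, (vs t * vg t γ / 4) * (tf t α + sg t * tg t β) ^ 2
      = Real.cos (α + β - γ) := by
  have h : α + β - γ = (α + β) - γ := by ring
  rw [h, Real.cos_sub, Real.cos_add, Real.sin_add]
  simp only [Finset.sum_range_succ, Finset.sum_range_zero, tf, tg, sg, vs, vg]
  norm_num
  ring

lemma fourier_lemma (p : ℕ) (hp : 0 < p) (n : ℤ) :
    ∑ j ∈ range p, Real.cos (2 * Real.pi * j * n / p)
      = if (p : ℤ) ∣ n then (p : ℝ) else 0 := by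
  have hpne : (p : ℝ) ≠ 0 := Nat.cast_ne_zero.2 hp.ne'
  by_cases hd : (p : ℤ) ∣ n
  · obtain ⟨d, hdd⟩ := hd
    rw [if_pos ⟨d, hdd⟩]
    have : ∀ j ∈ range p, Real.cos (2 * Real.pi * j * n / p) = 1 := by
      intro j hj
      have : (2 * Real.pi * j * n / p : ℝ) = ((j * d : ℤ) : ℝ) * (2 * Real.pi) := by
        have hn : (n : ℝ) = (p : ℝ) * (d : ℝ) := by exact_mod_cast congrArg Int.cast hdd
        field_simp [hn]
        rw [hn]; push_cast; ring
      rw [this, Real.cos_int_mul_two_pi]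
    rw [Finset.sum_congr rfl this]
    simp
  · rw [if_neg hd]
    have hpc : (p : ℂ) ≠ 0 := Nat.cast_ne_zero.2 hp.ne'
    set z : ℂ := Complex.exp (((2 * Real.pi * n / p : ℝ) : ℂ) * Complex.I) with hz
    have hzp : z ^ p = 1 := by
      rw [hz, ← Complex.exp_nat_mul]
      have : (p : ℂ) * (((2 * Real.pi * n / p : ℝ) : ℂ) * Complex.I)
          = (n : ℤ) * (2 * Real.pi * Complex.I) := by
        push_cast
        field_simp
      rw [this, Complex.exp_int_mul_two_pi_mul_I]
    have hz1 : z ≠ 1 := by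
      intro h1
      rw [hz, Complex.exp_eq_one_iff] at h1
      obtain ⟨m, hm⟩ := h1
      apply hd
      have hm' : (((2 * Real.pi * n / p : ℝ) : ℂ)) * Complex.I
          = ((m : ℂ) * (2 * Real.pi)) * Complex.I := by rw [hm]; ring
      have hI := mul_right_cancel₀ Complex.I_ne_zero hm'
      have hR : (2 * Real.pi * n / p : ℝ) = (m : ℝ) * (2 * Real.pi) := by
        exact_mod_cast hI
      have h2 : (2 * Real.pi) * (n : ℝ) = (2 * Real.pi) * ((p : ℝ) * m) := by
        field_simp at hR
        rw [hR]
      have h3 : (n : ℝ) = (p : ℝ) * m :=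
        mul_left_cancel₀ (by positivity) h2
      exact ⟨m, by exact_mod_cast h3⟩
    have hsum : ∑ j ∈ range p, z ^ j = 0 := by
      rw [geom_sum_eq hz1, hzp]
      simp
    have hre : ∀ j : ℕ, (z ^ j).re = Real.cos (2 * Real.pi * j * n / p) := by
      intro j
      rw [hz, ← Complex.exp_nat_mul]
      have : (j : ℂ) * (((2 * Real.pi * n / p : ℝ) : ℂ) * Complex.I)
          = ((2 * Real.pi * j * n / p : ℝ) : ℂ) * Complex.I := by
        push_cast; ring
      rw [this, Complex.exp_ofReal_mul_I_re]
    calc ∑ j ∈ range p, Real.cos (2 * Real.pi * j * n / p)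
        = (∑ j ∈ range p, z ^ j).re := by
          rw [Complex.re_sum]; exact (Finset.sum_congr rfl fun j _ => (hre j).symm)
      _ = 0 := by rw [hsum]; simp

lemma dvd_iff_modeq (p a b c : ℕ) (hc : c < p) :
    (p : ℤ) ∣ ((a : ℤ) + b - c) ↔ (a + b) % p = c := by
  rw [← Int.modEq_iff_dvd]
  unfold Int.ModEq
  have h1 : ((a : ℤ) + b) % p = (((a + b) % p : ℕ) : ℤ) := by push_cast; ring
  have h2 : (c : ℤ) % p = (c : ℤ) := Int.emod_eq_of_lt (by positivity) (by exact_mod_cast hc)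
  rw [h1, h2]
  constructor
  · intro hh; exact_mod_cast hh.symm
  · intro hh; exact_mod_cast hh.symm

/-- For any `p ≥ 2` and width `h ≥ 8p` there is a two-layer quadratic network with all
weights bounded by `⌊h/(8p)⌋^{-1/3}` in absolute value that exactly computes `p` times
the one-hot encoding of `a + b mod p`. -/
theorem stmt14 (p h : ℕ) (hp : 2 ≤ p) (hh : 8 * p ≤ h) :
    ∃ (W : Matrix (Fin h) (Fin (p + p)) ℝ) (V : Matrix (Fin p) (Fin h) ℝ),
      (∀ k j, |W k j| ≤ ((h / (8 * p) : ℕ) : ℝ) ^ (-(1 / 3 : ℝ))) ∧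
      (∀ c k, |V c k| ≤ ((h / (8 * p) : ℕ) : ℝ) ^ (-(1 / 3 : ℝ))) ∧
      ∀ a b c : Fin p,
        ∑ k, V c k * (W k (Fin.castAdd p a) + W k (Fin.natAdd p b)) ^ 2 =
          if ((a : ℕ) + (b : ℕ)) % p = (c : ℕ) then (p : ℝ) else 0 := by
  have hp0 : 0 < p := by omega
  set m : ℕ := h / (8 * p) with hm
  have hm1 : 1 ≤ m := (Nat.one_le_div_iff (by positivity)).2 hh
  set s : ℝ := (m : ℝ) ^ (-(1 / 3 : ℝ)) with hs
  have hs0 : 0 ≤ s := Real.rpow_nonneg (Nat.cast_nonneg m) _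
  have hmh : 8 * p * m ≤ h := by
    rw [hm, mul_comm (8 * p)]
    exact Nat.div_mul_le_self h (8 * p)
  refine ⟨fun k x => Wfun p m (k : ℕ) (x : ℕ), fun c k => Vfun p m (k : ℕ) (c : ℕ),
    ?_, ?_, ?_⟩
  · -- bound on W
    intro k x
    show |Wfun p m (k : ℕ) (x : ℕ)| ≤ s
    unfold Wfun
    split
    · rw [abs_mul, abs_of_nonneg hs0]
      have hb : |(if (x : ℕ) < p then tf ((k : ℕ) % (8 * p) / p) (thet p ((k : ℕ) % (8 * p) % p) (x : ℕ))
          else sg ((k : ℕ) % (8 * p) / p) *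
            tg ((k : ℕ) % (8 * p) / p) (thet p ((k : ℕ) % (8 * p) % p) ((x : ℕ) - p)))| ≤ 1 := by
        split
        · exact tf_abs _ _
        · rw [abs_mul, sg_abs, one_mul]; exact tg_abs _ _
      calc s * _ ≤ s * 1 := by exact mul_le_mul_of_nonneg_left hb hs0
        _ = s := mul_one s
    · simpa using hs0
  · -- bound on V
    intro c k
    show |Vfun p m (k : ℕ) (c : ℕ)| ≤ s
    unfold Vfun
    split
    · rw [abs_mul, abs_of_nonneg hs0]
      have hb : |vs ((k : ℕ) % (8 * p) / p) *
          vg ((k : ℕ) % (8 * p) / p) (thet p ((k : ℕ) % (8 * p) % p) (c : ℕ)) / 4| ≤ 1 := by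
        rw [abs_div, abs_mul, vs_abs, one_mul]
        have := vg_abs ((k : ℕ) % (8 * p) / p) (thet p ((k : ℕ) % (8 * p) % p) (c : ℕ))
        rw [show |(4 : ℝ)| = 4 by norm_num]
        linarith
      calc s * _ ≤ s * 1 := mul_le_mul_of_nonneg_left hb hs0
        _ = s := mul_one s
    · simpa using hs0
  · -- exact computation
    intro a b c
    have hca : ((Fin.castAdd p a : Fin (p + p)) : ℕ) = (a : ℕ) := rfl
    have hnb : ((Fin.natAdd p b : Fin (p + p)) : ℕ) = p + (b : ℕ) := rfl
    rw [show (∑ k : Fin h, Vfun p m (k : ℕ) (c : ℕ) *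
        (Wfun p m (k : ℕ) ((Fin.castAdd p a : Fin (p + p)) : ℕ) +
          Wfun p m (k : ℕ) ((Fin.natAdd p b : Fin (p + p)) : ℕ)) ^ 2)
        = ∑ i ∈ range h, Vfun p m i (c : ℕ) *
            (Wfun p m i (a : ℕ) + Wfun p m i (p + (b : ℕ))) ^ 2 by
      rw [hca, hnb]
      exact Fin.sum_univ_eq_sum_range
        (fun i => Vfun p m i (c : ℕ) * (Wfun p m i (a : ℕ) + Wfun p m i (p + (b : ℕ))) ^ 2) h]
    -- rewrite each summand
    set G : ℕ → ℝ := fun r =>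
      s ^ 3 * ((vs (r / p) * vg (r / p) (thet p (r % p) (c : ℕ)) / 4) *
        (tf (r / p) (thet p (r % p) (a : ℕ)) + sg (r / p) * tg (r / p) (thet p (r % p) (b : ℕ))) ^ 2)
      with hG
    have key : ∀ i : ℕ, Vfun p m i (c : ℕ) * (Wfun p m i (a : ℕ) + Wfun p m i (p + (b : ℕ))) ^ 2
        = if i < 8 * p * m then G (i % (8 * p)) else 0 := by
      intro i
      unfold Vfun Wfun
      by_cases hi : i < 8 * p * m
      · rw [if_pos hi, if_pos hi, if_pos hi, if_pos hi,
          if_pos a.2, if_neg (by omega : ¬ p + (b : ℕ) < p)]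
        rw [hG]
        simp only [Nat.add_sub_cancel_left]
        ring
      · rw [if_neg hi, if_neg hi, if_neg hi, if_neg hi]
        ring
    rw [Finset.sum_congr rfl fun i _ => key i]
    have step1 : ∑ i ∈ range h, (if i < 8 * p * m then G (i % (8 * p)) else 0)
        = ∑ i ∈ range (8 * p * m), (if i < 8 * p * m then G (i % (8 * p)) else 0) := by
      refine (Finset.sum_subset (Finset.range_mono hmh) fun i hi hni => ?_).symm
      rw [if_neg (by simpa using hni)]
    rw [step1]
    have step2 : ∑ i ∈ range (8 * p * m), (if i < 8 * p * m then G (i % (8 * p)) else 0)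
        = ∑ i ∈ range (m * (8 * p)), G (i % (8 * p)) := by
      rw [mul_comm (8 * p) m]
      exact Finset.sum_congr rfl fun i hi => if_pos (by rw [mul_comm m (8*p)] at hi ⊢; exact mem_range.1 hi)
    rw [step2, sum_mod_lemma]
    have step3 : ∑ r ∈ range (8 * p), G r
        = ∑ t ∈ range 8, ∑ j ∈ range p, G (t * p + j) := by
      have := sum_divmod_lemma (fun t j => G (t * p + j)) 8 p hp0
      rw [← this]
      refine Finset.sum_congr rfl fun r hr => ?_
      show G r = G (r / p * p + r % p)
      rw [Nat.div_add_mod']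
    rw [step3]
    have hGtj : ∀ t ∈ range 8, ∀ j ∈ range p, G (t * p + j)
        = s ^ 3 * ((vs t * vg t (thet p j (c : ℕ)) / 4) *
            (tf t (thet p j (a : ℕ)) + sg t * tg t (thet p j (b : ℕ))) ^ 2) := by
      intro t ht j hj
      have hjp := mem_range.1 hj
      have h1 : (t * p + j) / p = t := by
        rw [mul_comm t p, Nat.mul_add_div hp0, Nat.div_eq_of_lt hjp, Nat.add_zero]
      have h2 : (t * p + j) % p = j := by
        rw [mul_comm t p, Nat.mul_add_mod, Nat.mod_eq_of_lt hjp]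
      rw [hG]
      simp only [h1, h2]
    rw [Finset.sum_congr rfl fun t ht => Finset.sum_congr rfl (hGtj t ht)]
    rw [Finset.sum_comm]
    have step4 : ∀ j ∈ range p,
        ∑ t ∈ range 8, s ^ 3 * ((vs t * vg t (thet p j (c : ℕ)) / 4) *
            (tf t (thet p j (a : ℕ)) + sg t * tg t (thet p j (b : ℕ))) ^ 2)
        = s ^ 3 * Real.cos (2 * Real.pi * j *
            (((((a : ℕ) : ℤ) + ((b : ℕ) : ℤ) - ((c : ℕ) : ℤ)) : ℤ) : ℝ) / p) := by
      intro j hj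
      rw [← Finset.mul_sum, core_trig]
      congr 1
      unfold thet
      push_cast
      ring
    rw [Finset.sum_congr rfl step4, ← Finset.mul_sum,
      fourier_lemma p hp0 (((a : ℕ) : ℤ) + ((b : ℕ) : ℤ) - ((c : ℕ) : ℤ))]
    simp only [dvd_iff_modeq p (a : ℕ) (b : ℕ) (c : ℕ) c.2]
    have hm0 : (m : ℝ) ≠ 0 := Nat.cast_ne_zero.2 (by omega)
    have hms : (m : ℝ) * s ^ 3 = 1 := by
      have h3 : s ^ 3 = (m : ℝ) ^ (-(1 : ℝ)) := by
        rw [hs, ← Real.rpow_natCast ((m : ℝ) ^ (-(1 / 3 : ℝ))) 3,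
          ← Real.rpow_mul (Nat.cast_nonneg m)]
        norm_num
      rw [h3, Real.rpow_neg_one]
      field_simp
    rw [← mul_assoc, hms, one_mul]
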